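/- Let R be a uniformly random subset of size ℓ = (1/4)k^{3/2}√(log k) of V = {2-subsets of [k]}. For a fixed vertex v = {a,b} and t = 2 log k, the probability that |I_v^R| ≥ t, where I_v^R := {i : {a,i} ∈ R and {b,i} ∈ R}, is at most C(k−2, t) · C(|V|−2t, ℓ−2t)/C(|V|, ℓ), which is at most 1/k² for k sufficiently large. -/

import Mathlib

lemma descFac_mul_pow_le (j : ℕ) : ∀ {l n : ℕ}, l ≤ n →
    l.descFactorial j * n ^ j ≤ n.descFactorial j * l ^ j := by
  induction j with
  | zero => simp
  | succ j ih =>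
    intro l n h
    rw [Nat.descFactorial_succ, Nat.descFactorial_succ, pow_succ, pow_succ]
    have h1 : (l - j) * n ≤ (n - j) * l := by
      rw [Nat.sub_mul, Nat.sub_mul]
      calc l * n - j * n ≤ l * n - j * l :=
            Nat.sub_le_sub_left (Nat.mul_le_mul_left j h) _
        _ = n * l - j * l := by rw [Nat.mul_comm l n]
    calc (l - j) * l.descFactorial j * (n ^ j * n)
        = ((l - j) * n) * (l.descFactorial j * n ^ j) := by ring
      _ ≤ ((n - j) * l) * (n.descFactorial j * l ^ j) := Nat.mul_le_mul h1 (ih h)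
      _ = (n - j) * n.descFactorial j * (l ^ j * l) := by ring

lemma choose_mul_pow_le {l n : ℕ} (h : l ≤ n) (j : ℕ) :
    l.choose j * n ^ j ≤ n.choose j * l ^ j := by
  have h1 := descFac_mul_pow_le j h
  rw [Nat.descFactorial_eq_factorial_mul_choose, Nat.descFactorial_eq_factorial_mul_choose,
    mul_assoc, mul_assoc] at h1
  exact Nat.le_of_mul_le_mul_left h1 (Nat.factorial_pos j)

lemma choose_le_exp_pow (n : ℕ) {t : ℕ} (ht : 0 < t) :
    (n.choose t : ℝ) ≤ (Real.exp 1 * n / t) ^ t := by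
  have hf : (0:ℝ) < t.factorial := by exact_mod_cast t.factorial_pos
  have htR : (0:ℝ) < t := by exact_mod_cast ht
  have h1 : (n.choose t : ℝ) ≤ (n:ℝ) ^ t / t.factorial := by
    have := Nat.choose_le_pow_div (α := ℝ) t n
    push_cast at this ⊢
    convert this using 2
  have h2 : (t:ℝ) ^ t / t.factorial ≤ Real.exp t := Real.pow_div_factorial_le_exp _ htR.le t
  have h3 : (t:ℝ) ^ t ≤ Real.exp 1 ^ t * t.factorial := by
    rw [Real.exp_one_pow]
    calc (t:ℝ) ^ t = (t:ℝ)^t / t.factorial * t.factorial := by field_simp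
      _ ≤ Real.exp t * t.factorial := by
          exact mul_le_mul_of_nonneg_right h2 hf.le
  calc (n.choose t : ℝ) ≤ (n:ℝ)^t / t.factorial := h1
    _ ≤ (Real.exp 1 * n / t) ^ t := by
        rw [div_pow, mul_pow, div_le_div_iff₀ hf (by positivity)]
        calc (n:ℝ)^t * (t:ℝ)^t ≤ (n:ℝ)^t * (Real.exp 1 ^ t * t.factorial) :=
              mul_le_mul_of_nonneg_left h3 (by positivity)
          _ = Real.exp 1 ^ t * (n:ℝ)^t * t.factorial := by ring

set_option maxHeartbeats 1600000 in
open Classical in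
/-- Let `V` be the 2-element subsets of `[k]`, `ℓ ≤ (1/4) k^{3/2} √(log₂ k)` and
`t ≥ 2 log₂ k` with `2t ≤ ℓ`. For a fixed vertex `{a,b}`, the probability over a
uniformly random `ℓ`-subset `R` of `V` that `|I_{a,b}^R| ≥ t` is at most
`C(k-2, t) · C(|V|-2t, ℓ-2t)/C(|V|, ℓ)`, which is at most `1/k²` for `k`
sufficiently large. -/
theorem stmt_12 :
    ∃ k0 : ℕ, ∀ k : ℕ, k0 ≤ k → ∀ ℓ t : ℕ, ∀ a b : Fin k, a ≠ b →
      (ℓ : ℝ) ≤ (1 / 4) * (k : ℝ) ^ ((3 : ℝ) / 2) * Real.sqrt (Real.logb 2 k) →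
      2 * Real.logb 2 k ≤ (t : ℝ) →
      2 * t ≤ ℓ →
      let V := Finset.univ.filter (fun s : Finset (Fin k) => s.card = 2)
      let bad := (V.powersetCard ℓ).filter (fun R =>
        t ≤ (Finset.univ.filter (fun i : Fin k => i ≠ a ∧ i ≠ b ∧
          ({a, i} : Finset (Fin k)) ∈ R ∧ ({b, i} : Finset (Fin k)) ∈ R)).card)
      (bad.card : ℝ) / (V.card.choose ℓ) ≤
          (((k - 2).choose t * (V.card - 2 * t).choose (ℓ - 2 * t) : ℕ) : ℝ) /
            (V.card.choose ℓ) ∧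
        (((k - 2).choose t * (V.card - 2 * t).choose (ℓ - 2 * t) : ℕ) : ℝ) /
            (V.card.choose ℓ) ≤ 1 / k ^ 2 := by
  refine ⟨2, ?_⟩
  intro k hk ℓ t a b hab hℓ ht h2t V bad
  -- V facts
  have hV : V = (Finset.univ : Finset (Fin k)).powersetCard 2 := by
    ext s
    simp [V, Finset.mem_powersetCard, Finset.subset_univ]
  have hVcard : V.card = k.choose 2 := by
    rw [hV, Finset.card_powersetCard, Finset.card_univ, Fintype.card_fin]
  -- the ambient set of vertices ≠ a, b
  set W : Finset (Fin k) := Finset.univ.filter (fun i => i ≠ a ∧ i ≠ b) with hW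
  have hWcard : W.card = k - 2 := by
    have h1 : W = (Finset.univ \ {a, b} : Finset (Fin k)) := by
      rw [hW]; ext i; simp [not_or]
    rw [h1, Finset.card_sdiff_of_subset (Finset.subset_univ _), Finset.card_univ, Fintype.card_fin,
      Finset.card_insert_of_notMem (by simpa using hab), Finset.card_singleton]
  set ET : Finset (Fin k) → Finset (Finset (Fin k)) :=
    fun T => T.image (fun i => ({a, i} : Finset (Fin k))) ∪ T.image (fun i => ({b, i} : Finset (Fin k))) with hET
  have hETV : ∀ T ⊆ W, ET T ⊆ V := by
    intro T hTW s hs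
    rw [hET] at hs
    simp only [Finset.mem_union, Finset.mem_image] at hs
    have hcard : s.card = 2 := by
      rcases hs with ⟨i, hi, rfl⟩ | ⟨i, hi, rfl⟩
      · have := (Finset.mem_filter.mp (hTW hi)).2
        exact Finset.card_pair (Ne.symm this.1)
      · have := (Finset.mem_filter.mp (hTW hi)).2
        exact Finset.card_pair (Ne.symm this.2)
    simp [V, hcard]
  have hETcard : ∀ T ⊆ W, (ET T).card = 2 * T.card := by
    intro T hTW
    have hinj1 : Set.InjOn (fun i => ({a, i} : Finset (Fin k))) T := by
      intro i hi j hj hij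
      have hia : i ≠ a := (Finset.mem_filter.mp (hTW hi)).2.1
      have hij' : ({a, i} : Finset (Fin k)) = {a, j} := hij
      have : i ∈ ({a, j} : Finset (Fin k)) := by
        rw [← hij']; simp
      simpa [hia] using this
    have hinj2 : Set.InjOn (fun i => ({b, i} : Finset (Fin k))) T := by
      intro i hi j hj hij
      have hib : i ≠ b := (Finset.mem_filter.mp (hTW hi)).2.2
      have hij' : ({b, i} : Finset (Fin k)) = {b, j} := hij
      have : i ∈ ({b, j} : Finset (Fin k)) := by
        rw [← hij']; simp
      simpa [hib] using this
    have hdisj : Disjoint (T.image (fun i => ({a, i} : Finset (Fin k))))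
        (T.image (fun i => ({b, i} : Finset (Fin k)))) := by
      rw [Finset.disjoint_left]
      rintro s hs1 hs2
      obtain ⟨i, hi, rfl⟩ := Finset.mem_image.mp hs1
      obtain ⟨j, hj, hji⟩ := Finset.mem_image.mp hs2
      have hja : j ≠ a := (Finset.mem_filter.mp (hTW hj)).2.1
      have : a ∈ ({b, j} : Finset (Fin k)) := by rw [hji]; simp
      simp only [Finset.mem_insert, Finset.mem_singleton] at this
      rcases this with h | h
      · exact hab h
      · exact hja h.symm
    rw [hET]
    rw [Finset.card_union_of_disjoint hdisj, Finset.card_image_of_injOn hinj1,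
      Finset.card_image_of_injOn hinj2, two_mul]
  -- the covering family
  have hbadsub : bad ⊆ (W.powersetCard t).biUnion
      (fun T => ((V \ ET T).powersetCard (ℓ - 2*t)).image (fun S => S ∪ ET T)) := by
    intro R hR
    simp only [bad, Finset.mem_filter, Finset.mem_powersetCard] at hR
    obtain ⟨⟨hRV, hRcard⟩, hSt⟩ := hR
    obtain ⟨T, hTS, hTcard⟩ := Finset.exists_subset_card_eq hSt
    have hTW : T ⊆ W := by
      intro i hi
      have := (Finset.mem_filter.mp (hTS hi)).2
      simp [hW, this.1, this.2.1]
    have hETR : ET T ⊆ R := by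
      intro s hs
      rw [hET] at hs
      simp only [Finset.mem_union, Finset.mem_image] at hs
      rcases hs with ⟨i, hi, rfl⟩ | ⟨i, hi, rfl⟩
      · exact (Finset.mem_filter.mp (hTS hi)).2.2.2.1
      · exact (Finset.mem_filter.mp (hTS hi)).2.2.2.2
    rw [Finset.mem_biUnion]
    refine ⟨T, Finset.mem_powersetCard.mpr ⟨hTW, hTcard⟩, ?_⟩
    rw [Finset.mem_image]
    refine ⟨R \ ET T, Finset.mem_powersetCard.mpr ⟨?_, ?_⟩, ?_⟩
    · exact Finset.sdiff_subset_sdiff hRV le_rfl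
    · rw [Finset.card_sdiff_of_subset hETR, hRcard, hETcard T hTW, hTcard]
    · exact Finset.sdiff_union_of_subset hETR
  have hbadcard : bad.card ≤ (k-2).choose t * ((k.choose 2) - 2*t).choose (ℓ - 2*t) := by
    calc bad.card ≤ _ := Finset.card_le_card hbadsub
      _ ≤ ∑ T ∈ W.powersetCard t,
          (((V \ ET T).powersetCard (ℓ - 2*t)).image (fun S => S ∪ ET T)).card :=
        Finset.card_biUnion_le
      _ ≤ ∑ T ∈ W.powersetCard t, ((k.choose 2) - 2*t).choose (ℓ - 2*t) := by
          refine Finset.sum_le_sum fun T hT => ?_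
          obtain ⟨hTW, hTcard⟩ := Finset.mem_powersetCard.mp hT
          calc (((V \ ET T).powersetCard (ℓ - 2*t)).image (fun S => S ∪ ET T)).card
              ≤ ((V \ ET T).powersetCard (ℓ - 2*t)).card := Finset.card_image_le
            _ = ((k.choose 2) - 2*t).choose (ℓ - 2*t) := by
                rw [Finset.card_powersetCard, Finset.card_sdiff_of_subset (hETV T hTW),
                  hETcard T hTW, hTcard, hVcard]
      _ = (k-2).choose t * ((k.choose 2) - 2*t).choose (ℓ - 2*t) := by
          rw [Finset.sum_const, smul_eq_mul, Finset.card_powersetCard, hWcard]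
  rw [hVcard]
  have hkR : (2:ℝ) ≤ k := by exact_mod_cast hk
  have hkpos : (0:ℝ) < k := by linarith
  set L := Real.logb 2 (k:ℝ) with hLdef
  have hL1 : 1 ≤ L := by
    rw [hLdef, Real.le_logb_iff_rpow_le (by norm_num) hkpos]
    simpa using hkR
  have hLk : L ≤ k := by
    rw [hLdef, Real.logb_le_iff_le_rpow (by norm_num) hkpos]
    have h2k : (k:ℝ) ≤ (2:ℝ) ^ (k:ℕ) := by exact_mod_cast (Nat.lt_two_pow_self (n := k)).le
    calc (k:ℝ) ≤ (2:ℝ)^(k:ℕ) := h2k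
      _ = (2:ℝ)^((k:ℕ):ℝ) := (Real.rpow_natCast 2 k).symm
  have hL0 : (0:ℝ) ≤ L := by linarith
  have htR : (2:ℝ) ≤ t := le_trans (by linarith) ht
  have htRpos : (0:ℝ) < t := by linarith
  have htpos : 0 < t := by exact_mod_cast htRpos
  -- ℓ ≤ k.choose 2
  have hnR : ((k.choose 2 : ℕ):ℝ) = (k:ℝ) * ((k:ℝ)-1) / 2 := Nat.cast_choose_two (K := ℝ) k
  have hk32 : (k:ℝ)^((3:ℝ)/2) * Real.sqrt (k:ℝ) = (k:ℝ)^2 := by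
    rw [Real.sqrt_eq_rpow, ← Real.rpow_add hkpos, show (3:ℝ)/2 + 1/2 = (2:ℝ) by norm_num,
      Real.rpow_two]
  have hℓle : (ℓ:ℝ) ≤ (k:ℝ)^2/4 := by
    calc (ℓ:ℝ) ≤ 1/4 * (k:ℝ)^((3:ℝ)/2) * Real.sqrt L := hℓ
      _ ≤ 1/4 * (k:ℝ)^((3:ℝ)/2) * Real.sqrt (k:ℝ) := by
          have h0 : (0:ℝ) ≤ (k:ℝ)^((3:ℝ)/2) := Real.rpow_nonneg hkpos.le _
          have := Real.sqrt_le_sqrt hLk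
          nlinarith [Real.sqrt_nonneg L]
      _ = (k:ℝ)^2/4 := by rw [mul_assoc, hk32]; ring
  have hℓnR : (ℓ:ℝ) ≤ ((k.choose 2:ℕ):ℝ) := by rw [hnR]; nlinarith
  have hℓn : ℓ ≤ k.choose 2 := by exact_mod_cast hℓnR
  have hn2pos : (0:ℝ) < ((k.choose 2:ℕ):ℝ) := by rw [hnR]; nlinarith
  -- ratio bound
  have hratio : (ℓ.choose (2*t) : ℝ) ≤
      ((k.choose 2).choose (2*t) : ℝ) * ((ℓ:ℝ)/((k.choose 2:ℕ):ℝ))^(2*t) := by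
    have h := choose_mul_pow_le hℓn (2*t)
    rw [div_pow, ← mul_div_assoc, le_div_iff₀ (by positivity)]
    exact_mod_cast h
  have hchoose : ((k-2).choose t : ℝ) ≤ (Real.exp 1 * ((k-2:ℕ):ℝ) / t)^t :=
    choose_le_exp_pow _ htpos
  have hfrac : ((ℓ:ℝ)/((k.choose 2:ℕ):ℝ))^(2*t) ≤ ((k:ℝ) * L / (4 * ((k:ℝ)-1)^2))^t := by
    rw [pow_mul]
    have hk1pos : (0:ℝ) < ((k:ℝ)-1) := by linarith
    apply pow_le_pow_left₀ (by positivity) ?_ t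
    rw [div_pow, div_le_div_iff₀ (by positivity) (by positivity)]
    have hnsq : ((k.choose 2:ℕ):ℝ)^2 = (k:ℝ)^2*((k:ℝ)-1)^2/4 := by rw [hnR]; ring
    have hℓsq : (ℓ:ℝ)^2 ≤ (k:ℝ)^3 * L / 16 := by
      have hsq2 : (ℓ:ℝ)^2 ≤ (1/4 * (k:ℝ)^((3:ℝ)/2) * Real.sqrt L)^2 :=
        pow_le_pow_left₀ (by positivity) hℓ 2
      have e1 : ((k:ℝ)^((3:ℝ)/2))^2 = (k:ℝ)^3 := by
        rw [← Real.rpow_natCast ((k:ℝ)^((3:ℝ)/2)) 2, ← Real.rpow_mul hkpos.le,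
          show (3:ℝ)/2 * ((2:ℕ):ℝ) = ((3:ℕ):ℝ) by norm_num, Real.rpow_natCast]
      have e2 : (Real.sqrt L)^2 = L := Real.sq_sqrt hL0
      calc (ℓ:ℝ)^2 ≤ _ := hsq2
        _ = (1/16) * ((k:ℝ)^((3:ℝ)/2))^2 * (Real.sqrt L)^2 := by ring
        _ = (k:ℝ)^3 * L / 16 := by rw [e1, e2]; ring
    nlinarith [mul_le_mul_of_nonneg_right hℓsq (show (0:ℝ) ≤ 4*((k:ℝ)-1)^2 by positivity), hnsq]
  have hk2cast : ((k-2:ℕ):ℝ) = (k:ℝ) - 2 := by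
    push_cast [hk]
    ring
  have hk1pos : (0:ℝ) < ((k:ℝ)-1) := by linarith
  have hbase : Real.exp 1 * ((k:ℝ)-2) / (t:ℝ) * ((k:ℝ)*L/(4*((k:ℝ)-1)^2)) ≤ 1/2 := by
    have hkk : ((k:ℝ)-2)*(k:ℝ) ≤ ((k:ℝ)-1)^2 := by
      have hx : ((k:ℝ)-1)^2 = ((k:ℝ)-2)*(k:ℝ) + 1 := by ring
      linarith
    have he : Real.exp 1 ≤ 4 := le_trans Real.exp_one_lt_d9.le (by norm_num)
    have hediv : Real.exp 1 * ((k:ℝ)-2) / (t:ℝ) * ((k:ℝ)*L/(4*((k:ℝ)-1)^2))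
        = (Real.exp 1 * (((k:ℝ)-2)*(k:ℝ)) * L) / ((t:ℝ) * (4*((k:ℝ)-1)^2)) := by
      field_simp
    rw [hediv, div_le_iff₀ (by positivity)]
    have hexp0 : (0:ℝ) < Real.exp 1 := Real.exp_pos 1
    have h0 : (0:ℝ) ≤ ((k:ℝ)-2)*(k:ℝ) := mul_nonneg (by linarith) hkpos.le
    calc Real.exp 1 * (((k:ℝ)-2)*(k:ℝ)) * L ≤ 4 * (((k:ℝ)-2)*(k:ℝ)) * L :=
          mul_le_mul_of_nonneg_right (mul_le_mul_of_nonneg_right he h0) hL0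
      _ ≤ 4 * ((k:ℝ)-1)^2 * L :=
          mul_le_mul_of_nonneg_right (mul_le_mul_of_nonneg_left hkk (by norm_num)) hL0
      _ = ((k:ℝ)-1)^2 * 2 * (2*L) := by ring
      _ ≤ ((k:ℝ)-1)^2 * 2 * (t:ℝ) := mul_le_mul_of_nonneg_left ht (by positivity)
      _ = 1/2 * ((t:ℝ) * (4*((k:ℝ)-1)^2)) := by ring
  have hbase0 : (0:ℝ) ≤ Real.exp 1 * ((k:ℝ)-2) / (t:ℝ) * ((k:ℝ)*L/(4*((k:ℝ)-1)^2)) :=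
    mul_nonneg (div_nonneg (mul_nonneg (Real.exp_pos 1).le (by linarith)) htRpos.le)
      (div_nonneg (mul_nonneg hkpos.le hL0) (by positivity))
  have hmain : (Real.exp 1 * ((k-2:ℕ):ℝ) / t)^t * ((k:ℝ)*L/(4*((k:ℝ)-1)^2))^t ≤ (1/2:ℝ)^t := by
    rw [hk2cast, ← mul_pow]
    exact pow_le_pow_left₀ hbase0 hbase t
  have hhalf : (k:ℝ)^2 * (1/2:ℝ)^t ≤ 1 := by
    have hkey2 : (k:ℝ)^2 ≤ (2:ℝ)^(t:ℕ) := by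
      have e1 : (k:ℝ)^2 = (2:ℝ)^(L*2) := by
        rw [Real.rpow_mul (by norm_num), hLdef, Real.rpow_logb (by norm_num) (by norm_num) hkpos,
          Real.rpow_two]
      calc (k:ℝ)^2 = (2:ℝ)^(L*2) := e1
        _ ≤ (2:ℝ)^((t:ℕ):ℝ) := by
            apply Real.rpow_le_rpow_of_exponent_le (by norm_num)
            linarith
        _ = (2:ℝ)^(t:ℕ) := Real.rpow_natCast 2 t
    have h2tpos : (0:ℝ) < (2:ℝ)^(t:ℕ) := by positivity
    calc (k:ℝ)^2 * (1/2:ℝ)^t = (k:ℝ)^2 / (2:ℝ)^t := by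
          rw [div_pow, one_pow]; ring
      _ ≤ 1 := (div_le_one h2tpos).mpr hkey2
  -- positivity of denominators
  have hCpos : (0:ℝ) < ((k.choose 2).choose ℓ : ℝ) := by
    exact_mod_cast Nat.choose_pos hℓn
  have hCl2tR : (0:ℝ) < (ℓ.choose (2*t) : ℝ) := by
    exact_mod_cast Nat.choose_pos h2t
  -- the key inequality
  have big : (Real.exp 1 * ((k-2:ℕ):ℝ) / t)^t * ((ℓ:ℝ)/((k.choose 2:ℕ):ℝ))^(2*t)
      ≤ (1/2:ℝ)^t := by
    have e1 : (0:ℝ) ≤ (Real.exp 1 * ((k-2:ℕ):ℝ) / t)^t := by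
      rw [hk2cast]
      exact pow_nonneg (div_nonneg (mul_nonneg (Real.exp_pos 1).le (by linarith)) htRpos.le) t
    exact le_trans (mul_le_mul_of_nonneg_left hfrac e1) hmain
  have hkey : (k:ℝ)^2 * ((k-2).choose t : ℝ) * (ℓ.choose (2*t) : ℝ)
      ≤ ((k.choose 2).choose (2*t) : ℝ) := by
    calc (k:ℝ)^2 * ((k-2).choose t : ℝ) * (ℓ.choose (2*t) : ℝ)
        ≤ (k:ℝ)^2 * (Real.exp 1 * ((k-2:ℕ):ℝ) / t)^t *
          (((k.choose 2).choose (2*t) : ℝ) * ((ℓ:ℝ)/((k.choose 2:ℕ):ℝ))^(2*t)) := by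
          have e1 : (0:ℝ) ≤ (Real.exp 1 * ((k-2:ℕ):ℝ) / t)^t := by
            rw [hk2cast]
            exact pow_nonneg (div_nonneg (mul_nonneg (Real.exp_pos 1).le (by linarith)) htRpos.le) t
          have s1 : (k:ℝ)^2 * ((k-2).choose t : ℝ) ≤ (k:ℝ)^2 * (Real.exp 1 * ((k-2:ℕ):ℝ) / t)^t :=
            mul_le_mul_of_nonneg_left hchoose (by positivity)
          exact mul_le_mul s1 hratio (by positivity) (by positivity)
      _ = ((k.choose 2).choose (2*t) : ℝ) *
          ((Real.exp 1 * ((k-2:ℕ):ℝ) / t)^t * ((ℓ:ℝ)/((k.choose 2:ℕ):ℝ))^(2*t)) * (k:ℝ)^2 := by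
          ring
      _ ≤ ((k.choose 2).choose (2*t) : ℝ) * (1/2:ℝ)^t * (k:ℝ)^2 := by
          apply mul_le_mul_of_nonneg_right _ (by positivity)
          exact mul_le_mul_of_nonneg_left big (by positivity)
      _ = ((k.choose 2).choose (2*t) : ℝ) * ((k:ℝ)^2 * (1/2:ℝ)^t) := by ring
      _ ≤ ((k.choose 2).choose (2*t) : ℝ) * 1 := mul_le_mul_of_nonneg_left hhalf (by positivity)
      _ = ((k.choose 2).choose (2*t) : ℝ) := mul_one _
  have hid : (k.choose 2).choose ℓ * ℓ.choose (2*t) =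
      (k.choose 2).choose (2*t) * ((k.choose 2) - 2*t).choose (ℓ - 2*t) :=
    Nat.choose_mul h2t
  have hidR : ((k.choose 2).choose ℓ : ℝ) * (ℓ.choose (2*t) : ℝ) =
      ((k.choose 2).choose (2*t) : ℝ) * (((k.choose 2) - 2*t).choose (ℓ - 2*t) : ℝ) := by
    exact_mod_cast hid
  constructor
  · apply div_le_div_of_nonneg_right ?_ hCpos.le
    exact_mod_cast hbadcard
  · rw [div_le_div_iff₀ hCpos (by positivity), one_mul]
    refine le_of_mul_le_mul_right ?_ hCl2tR
    push_cast
    calc ((k-2).choose t : ℝ) * ((((k.choose 2) - 2*t).choose (ℓ - 2*t)) : ℝ) * (k:ℝ)^2 *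
          (ℓ.choose (2*t) : ℝ)
        = ((k:ℝ)^2 * ((k-2).choose t : ℝ) * (ℓ.choose (2*t) : ℝ)) *
          ((((k.choose 2) - 2*t).choose (ℓ - 2*t)) : ℝ) := by ring
      _ ≤ ((k.choose 2).choose (2*t) : ℝ) * ((((k.choose 2) - 2*t).choose (ℓ - 2*t)) : ℝ) :=
          mul_le_mul_of_nonneg_right hkey (by positivity)
      _ = ((k.choose 2).choose ℓ : ℝ) * (ℓ.choose (2*t) : ℝ) := hidR.symm
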